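/- arXiv:1605.05604 — 4 statements merged into one kernel-verified Lean document; each statement's English description precedes it below -/
import Mathlib

section
/- Let b : ℝ^m → ℝ^m satisfy ⟨b(ξ), ξ⟩ ≤ C₁(1 + |ξ|²) for all ξ, and |b(ξ) − ⟨b(ξ),ξ⟩ξ/|ξ|²| ≤ C₂(1 + |ξ|) for all ξ ≠ 0. Let J ∈ ℝ^{m×m} with |J − I| ≤ 1/2 (operator norm), and let z, h ∈ ℝ^m with |h| ≤ C₃ and |z| ≥ (C₃ + 1) ∨ (4C₃). Then ⟨z, J b(z + h)⟩ ≤ (4C₁ + 3C₂)|z|². -/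
open scoped RealInnerProductSpace

private lemma drift_aux1 (R c nw i1 i2 : ℝ) (hc : 0 ≤ c) (hR4 : 4 * c ≤ R)
    (hR1 : 1 ≤ R) (hnw : nw ≤ R + c) (hi1 : -(R * c) ≤ i1)
    (hi2 : -(1 / 2 * R * nw) ≤ i2) : 0 ≤ R ^ 2 + i1 + i2 := by
  nlinarith [mul_nonneg (by linarith : (0:ℝ) ≤ R - 3*c) (by linarith : (0:ℝ) ≤ R)]

private lemma drift_aux2 (A B R t1 t2 : ℝ) (hA : 0 ≤ A)
    (ht1 : t1 ≤ 15 / 4 * A * R ^ 2) (ht2 : t2 ≤ 3 * B * R ^ 2) :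
    t1 + t2 ≤ (4 * A + 3 * B) * R ^ 2 := by
  nlinarith [mul_nonneg hA (sq_nonneg R)]

theorem drift_radial_tangential_bound {m : ℕ} (C₁ C₂ C₃ : ℝ)
    (hC₁ : 0 ≤ C₁) (hC₂ : 0 ≤ C₂) (hC₃ : 0 ≤ C₃)
    (b : EuclideanSpace ℝ (Fin m) → EuclideanSpace ℝ (Fin m))
    (hb1 : ∀ ξ, ⟪b ξ, ξ⟫ ≤ C₁ * (1 + ‖ξ‖ ^ 2))
    (hb2 : ∀ ξ, ξ ≠ 0 → ‖b ξ - (⟪b ξ, ξ⟫ / ‖ξ‖ ^ 2) • ξ‖ ≤ C₂ * (1 + ‖ξ‖))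
    (J : EuclideanSpace ℝ (Fin m) →L[ℝ] EuclideanSpace ℝ (Fin m))
    (hJ : ‖J - 1‖ ≤ 1 / 2)
    (z h : EuclideanSpace ℝ (Fin m))
    (hh : ‖h‖ ≤ C₃) (hz : max (C₃ + 1) (4 * C₃) ≤ ‖z‖) :
    ⟪z, J (b (z + h))⟫ ≤ (4 * C₁ + 3 * C₂) * ‖z‖ ^ 2 := by
  have hz1 : C₃ + 1 ≤ ‖z‖ := le_trans (le_max_left _ _) hz
  have hz4 : 4 * C₃ ≤ ‖z‖ := le_trans (le_max_right _ _) hz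
  have hzpos : (1:ℝ) ≤ ‖z‖ := by linarith
  set w := z + h with hw
  have hwlb : (1:ℝ) ≤ ‖w‖ := by
    have h1 : ‖z‖ - ‖-h‖ ≤ ‖z - (-h)‖ := norm_sub_norm_le z (-h)
    simp only [norm_neg, sub_neg_eq_add] at h1
    linarith
  have hwub : ‖w‖ ≤ (5/4) * ‖z‖ := by
    have := norm_add_le z h
    linarith
  have hwne : w ≠ 0 := by
    intro h0
    rw [h0] at hwlb; simp at hwlb; linarith
  set α : ℝ := ⟪b w, w⟫ / ‖w‖ ^ 2 with hα
  set t : EuclideanSpace ℝ (Fin m) := b w - α • w with ht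
  have hbw : b w = α • w + t := by simp [ht]
  have htb : ‖t‖ ≤ C₂ * (1 + ‖w‖) := hb2 w hwne
  have hw2 : (1:ℝ) ≤ ‖w‖ ^ 2 := by nlinarith
  have hαle : α ≤ 2 * C₁ := by
    rw [hα, div_le_iff₀ (by positivity)]
    have h1 := hb1 w
    nlinarith [mul_nonneg hC₁ (by linarith : (0:ℝ) ≤ ‖w‖ ^ 2 - 1)]
  have hJn : ‖J‖ ≤ 3/2 := by
    have h1 : ‖J‖ = ‖J - 1 + 1‖ := by rw [sub_add_cancel]
    have h2 := norm_add_le (J - 1) (1 : EuclideanSpace ℝ (Fin m) →L[ℝ] EuclideanSpace ℝ (Fin m))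
    have h3 : ‖(1 : EuclideanSpace ℝ (Fin m) →L[ℝ] EuclideanSpace ℝ (Fin m))‖ ≤ 1 := by
      rw [ContinuousLinearMap.one_def]; exact ContinuousLinearMap.norm_id_le
    linarith
  have hsplit : ⟪z, J (b w)⟫ = α * ⟪z, J w⟫ + ⟪z, J t⟫ := by
    rw [hbw, map_add, map_smul, inner_add_right, real_inner_smul_right]
  -- Jw inner bounds
  have hJw1 : ∀ x : EuclideanSpace ℝ (Fin m), |⟪z, (J - 1) x⟫| ≤ (1/2) * ‖z‖ * ‖x‖ := by
    intro x
    have h1 := abs_real_inner_le_norm z ((J - 1) x)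
    have h2 := (J - 1).le_opNorm x
    have h3 : ‖(J - 1) x‖ ≤ (1/2) * ‖x‖ := le_trans h2 (by
      have : (0:ℝ) ≤ ‖x‖ := norm_nonneg x
      nlinarith)
    calc |⟪z, (J - 1) x⟫| ≤ ‖z‖ * ‖(J - 1) x‖ := h1
    _ ≤ ‖z‖ * ((1/2) * ‖x‖) := by
        apply mul_le_mul_of_nonneg_left h3 (norm_nonneg z)
    _ = (1/2) * ‖z‖ * ‖x‖ := by ring
  have hJdecomp : ∀ x : EuclideanSpace ℝ (Fin m), ⟪z, J x⟫ = ⟪z, x⟫ + ⟪z, (J - 1) x⟫ := by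
    intro x
    have : (J - 1) x = J x - x := by simp
    rw [this, inner_sub_right]; ring
  have hzw : ⟪z, w⟫ = ‖z‖ ^ 2 + ⟪z, h⟫ := by
    rw [hw, inner_add_right, real_inner_self_eq_norm_sq]
  have hzh : |⟪z, h⟫| ≤ ‖z‖ * C₃ := by
    have h1 := abs_real_inner_le_norm z h
    have h2 : ‖z‖ * ‖h‖ ≤ ‖z‖ * C₃ :=
      mul_le_mul_of_nonneg_left hh (norm_nonneg z)
    linarith
  have hJwpos : 0 ≤ ⟪z, J w⟫ := by
    rw [hJdecomp w, hzw]
    have h2 := (abs_le.mp (hJw1 w)).1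
    have h3 := (abs_le.mp hzh).1
    have hwub2 : ‖w‖ ≤ ‖z‖ + C₃ := by
      have := norm_add_le z h; linarith
    have := drift_aux1 ‖z‖ C₃ ‖w‖ ⟪z, h⟫ ⟪z, (J - 1) w⟫ hC₃ hz4 hzpos hwub2
      (by linarith) (by linarith)
    linarith
  have hcJ : ∀ x : EuclideanSpace ℝ (Fin m), ⟪z, J x⟫ ≤ (3/2) * ‖z‖ * ‖x‖ := by
    intro x
    calc ⟪z, J x⟫ ≤ |⟪z, J x⟫| := le_abs_self _
    _ ≤ ‖z‖ * ‖J x‖ := abs_real_inner_le_norm z (J x)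
    _ ≤ ‖z‖ * ((3/2) * ‖x‖) := by
        apply mul_le_mul_of_nonneg_left _ (norm_nonneg z)
        calc ‖J x‖ ≤ ‖J‖ * ‖x‖ := J.le_opNorm x
        _ ≤ (3/2) * ‖x‖ := mul_le_mul_of_nonneg_right hJn (norm_nonneg x)
    _ = (3/2) * ‖z‖ * ‖x‖ := by ring
  have hJwub : ⟪z, J w⟫ ≤ (3/2) * ‖z‖ * ‖w‖ := hcJ w
  have hJt : ⟪z, J t⟫ ≤ (3/2) * ‖z‖ * ‖t‖ := hcJ t
  -- combine
  rw [hsplit]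
  have hterm1 : α * ⟪z, J w⟫ ≤ (15/4) * C₁ * ‖z‖ ^ 2 := by
    have h1 : α * ⟪z, J w⟫ ≤ 2 * C₁ * ⟪z, J w⟫ :=
      mul_le_mul_of_nonneg_right hαle hJwpos
    have h2 : 2 * C₁ * ⟪z, J w⟫ ≤ 2 * C₁ * ((3/2) * ‖z‖ * ((5/4) * ‖z‖)) := by
      apply mul_le_mul_of_nonneg_left _ (by linarith)
      calc ⟪z, J w⟫ ≤ (3/2) * ‖z‖ * ‖w‖ := hJwub
      _ ≤ (3/2) * ‖z‖ * ((5/4) * ‖z‖) := by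
          apply mul_le_mul_of_nonneg_left hwub (by positivity)
    have h3 : 2 * C₁ * ((3/2) * ‖z‖ * ((5/4) * ‖z‖)) = (15/4) * C₁ * ‖z‖ ^ 2 := by ring
    linarith
  have hterm2 : ⟪z, J t⟫ ≤ 3 * C₂ * ‖z‖ ^ 2 := by
    have h1 : ‖t‖ ≤ C₂ * (2 * ‖z‖) := by
      have hw2 : 1 + ‖w‖ ≤ 2 * ‖z‖ := by
        have := norm_add_le z h; linarith
      calc ‖t‖ ≤ C₂ * (1 + ‖w‖) := htb
      _ ≤ C₂ * (2 * ‖z‖) := mul_le_mul_of_nonneg_left hw2 hC₂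
    calc ⟪z, J t⟫ ≤ (3/2) * ‖z‖ * ‖t‖ := hJt
    _ ≤ (3/2) * ‖z‖ * (C₂ * (2 * ‖z‖)) := by
        apply mul_le_mul_of_nonneg_left h1 (by positivity)
    _ = 3 * C₂ * ‖z‖ ^ 2 := by ring
  exact drift_aux2 C₁ C₂ ‖z‖ _ _ hC₁ hterm1 hterm2
end

section
/- Let z : [0,T] → ℝ^m be differentiable with ż_t = J(t, z_t) b(ψ(t, z_t)), where b : ℝ^m → ℝ^m is continuous with ⟨b(ξ), ξ⟩ ≤ C₁(1 + |ξ|²) for all ξ and |b(ξ) − ⟨b(ξ),ξ⟩ξ/|ξ|²| ≤ C₂(1 + |ξ|) for ξ ≠ 0; J : [0,T] × ℝ^m → ℝ^{m×m} is continuous with sup_{t,ξ} |J(t,ξ) − I| ≤ 1/2; and ψ : [0,T] × ℝ^m → ℝ^m is continuous with sup_{t,ξ} |ψ(t,ξ) − ξ| ≤ C₃. Then there is a constant C, depending only on C₁, C₂, C₃ and on C₄ := sup{|b(ξ)| : |ξ| ≤ (2C₃+1)∨(5C₃) + 1}, such that sup_{t∈[0,T]} |z_t| ≤ (C T + |z_0|)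 e^{C T}. -/
open Set
open scoped RealInnerProductSpace

open Filter
open scoped Topology

set_option maxHeartbeats 1000000 in
lemma key_inner_ineq (C₁ C₂ C₃ C₄ K : ℝ) (hC₁ : 0 ≤ C₁) (hC₂ : 0 ≤ C₂) (hC₃ : 0 ≤ C₃)
    (hC₄ : 0 ≤ C₄) (hK : K = 3*C₁*(1+C₃) + 2*C₂*(1+C₃) + 2*C₄ + 1)
    {m : ℕ} (A : EuclideanSpace ℝ (Fin m) →L[ℝ] EuclideanSpace ℝ (Fin m))
    (x w v : EuclideanSpace ℝ (Fin m))
    (hvw : ⟪v, w⟫ ≤ C₁ * (1 + ‖w‖ ^ 2))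
    (hτ : w ≠ 0 → ‖v - (⟪v, w⟫ / ‖w‖ ^ 2) • w‖ ≤ C₂ * (1 + ‖w‖))
    (hsm : ‖w‖ ≤ max (2*C₃+1) (5*C₃) + 1 → ‖v‖ ≤ C₄)
    (hA : ‖A - 1‖ ≤ 1/2)
    (hwx : ‖w - x‖ ≤ C₃) :
    ⟪A v, x⟫ ≤ K * (1 + ‖x‖) * ‖x‖ := by
  have hA1 : ∀ u : EuclideanSpace ℝ (Fin m), ‖A u - u‖ ≤ 1/2 * ‖u‖ := by
    intro u
    have h1 := (A - 1).le_opNorm u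
    simp only [ContinuousLinearMap.sub_apply, ContinuousLinearMap.one_apply] at h1
    exact h1.trans (mul_le_mul_of_nonneg_right hA (norm_nonneg u))
  have hA3 : ∀ u : EuclideanSpace ℝ (Fin m), ‖A u‖ ≤ 3/2 * ‖u‖ := by
    intro u
    calc ‖A u‖ = ‖(A u - u) + u‖ := by rw [sub_add_cancel]
    _ ≤ ‖A u - u‖ + ‖u‖ := norm_add_le _ _
    _ ≤ 3/2 * ‖u‖ := by linarith [hA1 u]
  have hAx : ∀ u : EuclideanSpace ℝ (Fin m), ⟪A u, x⟫ ≤ 3/2 * ‖u‖ * ‖x‖ := by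
    intro u
    exact (real_inner_le_norm _ _).trans (mul_le_mul_of_nonneg_right (hA3 u) (norm_nonneg x))
  have hKnn : 0 ≤ K := by
    nlinarith [mul_nonneg hC₁ hC₃, mul_nonneg hC₂ hC₃]
  by_cases hbig : ‖x‖ ≤ max (2*C₃+1) (5*C₃) + 1 - C₃
  · -- small case
    have hw : ‖w‖ ≤ max (2*C₃+1) (5*C₃) + 1 := by
      have h2 := norm_sub_norm_le w x
      linarith
    have hv := hsm hw
    have h3 := hAx v
    have hK4 : 3/2 * C₄ ≤ K := by nlinarith [mul_nonneg hC₁ hC₃, mul_nonneg hC₂ hC₃]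
    nlinarith [norm_nonneg x, mul_nonneg hKnn (mul_nonneg (norm_nonneg x) (norm_nonneg x)),
      mul_nonneg (norm_nonneg v) (norm_nonneg x)]
  · push_neg at hbig
    have hM1 : 2*C₃+1 ≤ max (2*C₃+1) (5*C₃) := le_max_left _ _
    have hM2 : 5*C₃ ≤ max (2*C₃+1) (5*C₃) := le_max_right _ _
    have hx3 : 3*C₃ + 1 ≤ ‖x‖ := by linarith
    have hwlb : 1 ≤ ‖w‖ := by
      have h2 := norm_sub_norm_le x w
      rw [norm_sub_rev] at h2
      linarith
    have hw0 : w ≠ 0 := by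
      intro h; rw [h, norm_zero] at hwlb; linarith
    set ρ : ℝ := ⟪v, w⟫ / ‖w‖ ^ 2 with hρdef
    set τ := v - ρ • w with hτdef
    have hτn : ‖τ‖ ≤ C₂ * (1 + ‖w‖) := hτ hw0
    have hvdec : A v = ρ • A w + A τ := by
      have h4 : v = ρ • w + τ := by rw [hτdef]; abel
      rw [h4, map_add, map_smul]
    have hsplit : ⟪A v, x⟫ = ρ * ⟪A w, x⟫ + ⟪A τ, x⟫ := by
      rw [hvdec, inner_add_left, real_inner_smul_left]
    have hwub : ‖w‖ ≤ ‖x‖ + C₃ := by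
      have h2 := norm_sub_norm_le w x
      linarith
    have hτx : ⟪A τ, x⟫ ≤ 3/2 * (C₂*(1+‖w‖)) * ‖x‖ :=
      (hAx τ).trans (mul_le_mul_of_nonneg_right
        (mul_le_mul_of_nonneg_left hτn (by norm_num)) (norm_nonneg x))
    have hinsum : ⟪A w, x⟫ = ⟪x, x⟫ + ⟪w - x, x⟫ + ⟪A w - w, x⟫ := by
      rw [← inner_add_left, ← inner_add_left]
      congr 1
      abel
    have hAwx_low : ‖x‖^2 - C₃*‖x‖ - 1/2*‖w‖*‖x‖ ≤ ⟪A w, x⟫ := by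
      rw [hinsum, real_inner_self_eq_norm_sq]
      have l1 := (abs_le.1 (abs_real_inner_le_norm (w - x) x)).1
      have l2 := (abs_le.1 (abs_real_inner_le_norm (A w - w) x)).1
      have l3 := hA1 w
      have p1 : ‖w - x‖ * ‖x‖ ≤ C₃ * ‖x‖ := mul_le_mul_of_nonneg_right hwx (norm_nonneg x)
      have p2 : ‖A w - w‖ * ‖x‖ ≤ 1/2 * ‖w‖ * ‖x‖ := mul_le_mul_of_nonneg_right l3 (norm_nonneg x)
      linarith
    have hAwx_nonneg : 0 ≤ ⟪A w, x⟫ := by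
      have p3 : 1/2 * ‖w‖ * ‖x‖ ≤ 1/2 * (‖x‖ + C₃) * ‖x‖ :=
        mul_le_mul_of_nonneg_right (mul_le_mul_of_nonneg_left hwub (by norm_num)) (norm_nonneg x)
      have p4 : 0 ≤ ‖x‖ * (‖x‖ - 3*C₃) := mul_nonneg (norm_nonneg x) (by linarith)
      nlinarith [hAwx_low]
    have hAwx_up : ⟪A w, x⟫ ≤ 3/2 * (‖x‖+C₃) * ‖x‖ :=
      (hAx w).trans (mul_le_mul_of_nonneg_right
        (mul_le_mul_of_nonneg_left hwub (by norm_num)) (norm_nonneg x))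
    have hρ_term : ρ * ⟪A w, x⟫ ≤ 2*C₁ * (3/2 * (‖x‖+C₃) * ‖x‖) := by
      have hxn := norm_nonneg x
      have hrhs : 0 ≤ 2*C₁ * (3/2 * (‖x‖+C₃) * ‖x‖) := by
        apply mul_nonneg (by linarith)
        apply mul_nonneg (by linarith) (norm_nonneg x)
      rcases le_or_gt ρ 0 with h | h
      · linarith [mul_nonpos_of_nonpos_of_nonneg h hAwx_nonneg]
      · have hw2 : (0:ℝ) < ‖w‖^2 := pow_pos (lt_of_lt_of_le one_pos hwlb) 2
        have hρle : ρ ≤ 2*C₁ := by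
          rw [hρdef, div_le_iff₀ hw2]
          nlinarith [hvw, mul_nonneg (mul_nonneg hC₁ (by linarith : (0:ℝ) ≤ ‖w‖ - 1))
            (by linarith : (0:ℝ) ≤ ‖w‖ + 1)]
        exact mul_le_mul hρle hAwx_up hAwx_nonneg (by linarith)
    have e1 : ρ * ⟪A w, x⟫ ≤ 3*C₁*(1+C₃)*((1+‖x‖)*‖x‖) := by
      nlinarith [mul_nonneg hC₁ (norm_nonneg x),
        mul_nonneg (mul_nonneg hC₁ hC₃) (mul_nonneg (norm_nonneg x) (norm_nonneg x))]
    have e2 : ⟪A τ, x⟫ ≤ 2*C₂*(1+C₃)*((1+‖x‖)*‖x‖) := by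
      nlinarith [mul_nonneg hC₂ (norm_nonneg x),
        mul_nonneg (mul_nonneg hC₂ hC₃) (norm_nonneg x),
        mul_nonneg hC₂ (mul_nonneg (norm_nonneg x) (norm_nonneg x)),
        mul_nonneg (mul_nonneg hC₂ hC₃) (mul_nonneg (norm_nonneg x) (norm_nonneg x)),
        mul_nonneg (mul_nonneg hC₂ (norm_nonneg x)) (by linarith : (0:ℝ) ≤ ‖x‖ + C₃ - ‖w‖)]
    rw [hsplit]
    nlinarith [e1, e2, mul_nonneg hC₄ (mul_nonneg (by linarith [norm_nonneg x] : (0:ℝ) ≤ 1 + ‖x‖) (norm_nonneg x)),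
      norm_nonneg x, mul_nonneg (norm_nonneg x) (norm_nonneg x)]

lemma frequently_slope_lt' {f : ℝ → ℝ} {d x : ℝ} (h : HasDerivAt f d x) :
    ∀ r, d < r → ∃ᶠ y in 𝓝[>] x, (y - x)⁻¹ * (f y - f x) < r := by
  intro r hr
  have h1 : HasDerivWithinAt f d (Ioi x) x := h.hasDerivWithinAt
  have h2 : Tendsto (slope f x) (𝓝[>] x) (𝓝 d) := by
    have := hasDerivWithinAt_iff_tendsto_slope.1 h1
    rwa [Set.diff_singleton_eq_self (by simp)] at this
  have h3 : ∀ᶠ y in 𝓝[>] x, slope f x y < r := h2.eventually_lt_const hr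
  exact (h3.mono fun y hy => by rwa [slope_def_field, div_eq_inv_mul] at hy).frequently

lemma exp_sub_one_le' (s : ℝ) : Real.exp s - 1 ≤ s * Real.exp s := by
  have h1 := mul_le_mul_of_nonneg_right (Real.add_one_le_exp (-s)) (Real.exp_pos s).le
  rw [← Real.exp_add, neg_add_cancel, Real.exp_zero] at h1
  nlinarith [Real.exp_pos s]

/-- A priori sup-norm estimate for solutions of `ż = J(t,z) b(ψ(t,z))` under one-sided
radial growth and linear tangential growth of the drift `b`. -/
theorem apriori_sup_bound (C₁ C₂ C₃ C₄ : ℝ)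
    (hC₁ : 0 ≤ C₁) (hC₂ : 0 ≤ C₂) (hC₃ : 0 ≤ C₃) (hC₄ : 0 ≤ C₄) :
    ∃ C : ℝ, 0 ≤ C ∧
      ∀ (m : ℕ) (T : ℝ), 0 < T →
      ∀ (b : EuclideanSpace ℝ (Fin m) → EuclideanSpace ℝ (Fin m))
        (J : ℝ → EuclideanSpace ℝ (Fin m) →
          (EuclideanSpace ℝ (Fin m) →L[ℝ] EuclideanSpace ℝ (Fin m)))
        (ψ : ℝ → EuclideanSpace ℝ (Fin m) → EuclideanSpace ℝ (Fin m))
        (z : ℝ → EuclideanSpace ℝ (Fin m)),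
        Continuous b →
        (∀ ξ, ⟪b ξ, ξ⟫ ≤ C₁ * (1 + ‖ξ‖ ^ 2)) →
        (∀ ξ, ξ ≠ 0 → ‖b ξ - (⟪b ξ, ξ⟫ / ‖ξ‖ ^ 2) • ξ‖ ≤ C₂ * (1 + ‖ξ‖)) →
        (∀ ξ, ‖ξ‖ ≤ max (2 * C₃ + 1) (5 * C₃) + 1 → ‖b ξ‖ ≤ C₄) →
        Continuous (fun p : ℝ × EuclideanSpace ℝ (Fin m) => J p.1 p.2) →
        (∀ t ∈ Icc (0 : ℝ) T, ∀ ξ, ‖J t ξ - 1‖ ≤ 1 / 2) →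
        Continuous (fun p : ℝ × EuclideanSpace ℝ (Fin m) => ψ p.1 p.2) →
        (∀ t ∈ Icc (0 : ℝ) T, ∀ ξ, ‖ψ t ξ - ξ‖ ≤ C₃) →
        (∀ t ∈ Icc (0 : ℝ) T, HasDerivAt z (J t (z t) (b (ψ t (z t)))) t) →
        ∀ t ∈ Icc (0 : ℝ) T, ‖z t‖ ≤ (C * T + ‖z 0‖) * Real.exp (C * T) := by
  refine ⟨3*C₁*(1+C₃) + 2*C₂*(1+C₃) + 2*C₄ + 1,
    by nlinarith [mul_nonneg hC₁ hC₃, mul_nonneg hC₂ hC₃], ?_⟩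
  intro m T hT b J ψ z hbcont hb1 hb2 hb4 hJcont hJ hψcont hψ hz
  set K : ℝ := 3*C₁*(1+C₃) + 2*C₂*(1+C₃) + 2*C₄ + 1 with hKdef
  have hK1 : 1 ≤ K := by nlinarith [mul_nonneg hC₁ hC₃, mul_nonneg hC₂ hC₃]
  have hKnn : 0 ≤ K := by linarith
  have key : ∀ t ∈ Icc (0:ℝ) T,
      ⟪J t (z t) (b (ψ t (z t))), z t⟫ ≤ K * (1 + ‖z t‖) * ‖z t‖ := by
    intro t ht
    exact key_inner_ineq C₁ C₂ C₃ C₄ K hC₁ hC₂ hC₃ hC₄ hKdef (J t (z t)) (z t)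
      (ψ t (z t)) (b (ψ t (z t))) (hb1 _) (hb2 _) (hb4 _) (hJ t ht (z t)) (hψ t ht (z t))
  have hEpos : 0 < Real.exp (K*T) := Real.exp_pos _
  have main : ∀ δ, 0 < δ → ∀ t ∈ Icc (0:ℝ) T,
      ‖z t‖ ≤ (K*T + ‖z 0‖) * Real.exp (K*T) + δ * Real.exp (K*T) := by
    intro δ hδ t ht
    set g : ℝ → ℝ := fun s => δ^2 + ‖z s‖^2 with hgdef
    have hgpos : ∀ s, 0 < g s := fun s =>
      add_pos_of_pos_of_nonneg (pow_pos hδ 2) (sq_nonneg _)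
    set f : ℝ → ℝ := fun s => Real.sqrt (g s) with hfdef
    have hgd : ∀ s ∈ Icc (0:ℝ) T,
        HasDerivAt g (2 * ⟪z s, J s (z s) (b (ψ s (z s)))⟫) s := by
      intro s hs
      exact HasDerivAt.const_add (δ^2) ((hz s hs).norm_sq)
    have hfd : ∀ s ∈ Icc (0:ℝ) T, HasDerivAt f
        ((2 * ⟪z s, J s (z s) (b (ψ s (z s)))⟫) / (2 * Real.sqrt (g s))) s :=
      fun s hs => ((hgd s hs).sqrt (ne_of_gt (hgpos s)))
    have hfcont : ContinuousOn f (Icc (0:ℝ) T) :=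
      fun s hs => ((hfd s hs).continuousAt).continuousWithinAt
    have hsqle : ∀ s, ‖z s‖ ≤ Real.sqrt (g s) := by
      intro s
      have h0 : ‖z s‖^2 ≤ g s := le_add_of_nonneg_left (sq_nonneg δ)
      have h1 : Real.sqrt (‖z s‖^2) ≤ Real.sqrt (g s) := Real.sqrt_le_sqrt h0
      rwa [Real.sqrt_sq (norm_nonneg _)] at h1
    have hfa : f 0 ≤ δ + ‖z 0‖ := by
      have h2 : δ + ‖z 0‖ = Real.sqrt ((δ + ‖z 0‖)^2) :=
        (Real.sqrt_sq (by positivity)).symm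
      rw [h2]
      have h0 : g 0 = δ^2 + ‖z 0‖^2 := rfl
      have h1 : g 0 ≤ (δ + ‖z 0‖)^2 := by
        nlinarith [norm_nonneg (z 0), hδ.le, mul_nonneg hδ.le (norm_nonneg (z 0))]
      exact Real.sqrt_le_sqrt h1
    have hbound : ∀ s ∈ Ico (0:ℝ) T,
        (2 * ⟪z s, J s (z s) (b (ψ s (z s)))⟫) / (2 * Real.sqrt (g s)) ≤ K * f s + K := by
      intro s hs
      have hsI : s ∈ Icc (0:ℝ) T := Ico_subset_Icc_self hs
      have hk := key s hsI
      rw [real_inner_comm] at hk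
      have hsq := hsqle s
      have hsqpos : 0 < Real.sqrt (g s) := Real.sqrt_pos.2 (hgpos s)
      rw [div_le_iff₀ (by linarith : (0:ℝ) < 2 * Real.sqrt (g s))]
      have h1 : Real.sqrt (g s) ^ 2 = g s := Real.sq_sqrt (hgpos s).le
      have h2 : g s = δ^2 + ‖z s‖^2 := rfl
      have h3 : f s = Real.sqrt (g s) := rfl
      rw [h3]
      nlinarith [hk, hsq, hsqpos, norm_nonneg (z s), hKnn, sq_nonneg δ,
        mul_nonneg hKnn (sq_nonneg δ),
        mul_nonneg hKnn (sub_nonneg.2 hsq)]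
    have G := le_gronwallBound_of_liminf_deriv_right_le
      (f' := fun s => (2 * ⟪z s, J s (z s) (b (ψ s (z s)))⟫) / (2 * Real.sqrt (g s)))
      hfcont
      (fun s hs r hr => frequently_slope_lt' (hfd s (Ico_subset_Icc_self hs)) r hr)
      hfa hbound t ht
    have hKT : K * t ≤ K * T := mul_le_mul_of_nonneg_left ht.2 hKnn
    have hexp : Real.exp (K*t) ≤ Real.exp (K*T) := Real.exp_le_exp.2 hKT
    have hgb : gronwallBound (δ + ‖z 0‖) K K (t - 0) ≤
        (K*T + ‖z 0‖) * Real.exp (K*T) + δ * Real.exp (K*T) := by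
      rw [sub_zero, gronwallBound_of_K_ne_0 (by linarith : K ≠ 0)]
      rw [div_self (by linarith : K ≠ 0)]
      have h5 := exp_sub_one_le' (K*t)
      have h6 : K*t*Real.exp (K*t) ≤ K*T*Real.exp (K*T) := by
        have h7 : 0 ≤ K*t := mul_nonneg hKnn ht.1
        nlinarith [Real.exp_pos (K*t), hexp, hKT,
          mul_nonneg (mul_nonneg hKnn hT.le) (sub_nonneg.2 hexp)]
      have h8 : (δ + ‖z 0‖) * Real.exp (K*t) ≤ (δ + ‖z 0‖) * Real.exp (K*T) :=
        mul_le_mul_of_nonneg_left hexp (by linarith [norm_nonneg (z 0), hδ])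
      show (δ + ‖z 0‖) * Real.exp (K * t) + 1 * (Real.exp (K * t) - 1) ≤ _
      nlinarith [h5, h6, h8]
    calc ‖z t‖ ≤ f t := hsqle t
    _ ≤ gronwallBound (δ + ‖z 0‖) K K (t - 0) := G
    _ ≤ _ := hgb
  intro t ht
  refine le_of_forall_pos_le_add ?_
  intro ε hε
  have h9 := main (ε / Real.exp (K*T)) (div_pos hε hEpos) t ht
  rwa [div_mul_cancel₀ _ (ne_of_gt hEpos)] at h9
end

section
/- Let ψ : [0,T] × [0,T] × ℝ^m → ℝ^m be a continuously differentiable flow (i.e., ψ(t,t,ξ) = ξ and ψ(u,t,ψ(s,u,ξ)) = ψ(s,t,ξ) for all s,u,t,ξ, with ξ ↦ ψ(s,t,ξ) a diffeomorphism). Suppose for s ≤ u the function u ↦ χ_s(u,ξ) solves ż_u = (D_ξψ(s,u,ξ)|_{ξ=z_u})^{-1} b(ψ(s,u,z_u)) with χ_s(s,ξ) = ξ, and that b is locally Lipschitz so these ODEs have unique solutions. Define φ(s,t,ξ) = ψ(s,t,χ_s(t,ξ)). Then φ satisfies the semiflow property: φ(u,t,φ(s,u,ξ)) = φ(s,t,ξ)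 for all s ≤ u ≤ t and ξ ∈ ℝ^m. -/
open Set

/-- The composition `φ(s,t,ξ) = ψ(s,t,χ_s(t,ξ))` of the driftless flow `ψ` with the
solution `χ` of the transformed drift ODE satisfies the semiflow property. -/
theorem semiflow_property {m : ℕ} (T : ℝ) (hT : 0 < T)
    (ψ : ℝ → ℝ → EuclideanSpace ℝ (Fin m) → EuclideanSpace ℝ (Fin m))
    (D J : ℝ → ℝ → EuclideanSpace ℝ (Fin m) →
      (EuclideanSpace ℝ (Fin m) →L[ℝ] EuclideanSpace ℝ (Fin m)))
    (b : EuclideanSpace ℝ (Fin m) → EuclideanSpace ℝ (Fin m))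
    (χ : ℝ → ℝ → EuclideanSpace ℝ (Fin m) → EuclideanSpace ℝ (Fin m))
    -- ψ is a flow:
    (hψ_id : ∀ t ∈ Icc (0 : ℝ) T, ∀ ξ, ψ t t ξ = ξ)
    (hψ_flow : ∀ s ∈ Icc (0 : ℝ) T, ∀ u ∈ Icc (0 : ℝ) T, ∀ t ∈ Icc (0 : ℝ) T,
      ∀ ξ, ψ u t (ψ s u ξ) = ψ s t ξ)
    -- continuously differentiable in space, with Jacobian D and inverse Jacobian J:
    (hD : ∀ s ∈ Icc (0 : ℝ) T, ∀ t ∈ Icc (0 : ℝ) T, ∀ ξ, HasFDerivAt (ψ s t) (D s t ξ) ξ)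
    (hDcont : ∀ s ∈ Icc (0 : ℝ) T, ∀ t ∈ Icc (0 : ℝ) T,
      Continuous (fun ξ => D s t ξ))
    (hJD : ∀ s ∈ Icc (0 : ℝ) T, ∀ t ∈ Icc (0 : ℝ) T, ∀ ξ,
      (J s t ξ).comp (D s t ξ) = 1 ∧ (D s t ξ).comp (J s t ξ) = 1)
    -- b is locally Lipschitz:
    (hb : LocallyLipschitz b)
    -- χ_v solves the transformed ODE with initial condition ξ at time v:
    (hχ_init : ∀ v ∈ Icc (0 : ℝ) T, ∀ ξ, χ v v ξ = ξ)
    (hχ_ode : ∀ v ∈ Icc (0 : ℝ) T, ∀ ξ, ∀ u ∈ Icc (0 : ℝ) T,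
      HasDerivAt (fun r => χ v r ξ)
        (J v u (χ v u ξ) (b (ψ v u (χ v u ξ)))) u)
    -- the transformed ODEs have unique solutions:
    (huniq : ∀ v ∈ Icc (0 : ℝ) T, ∀ z₁ z₂ : ℝ → EuclideanSpace ℝ (Fin m),
      (∀ u ∈ Icc (0 : ℝ) T, HasDerivAt z₁ (J v u (z₁ u) (b (ψ v u (z₁ u)))) u) →
      (∀ u ∈ Icc (0 : ℝ) T, HasDerivAt z₂ (J v u (z₂ u) (b (ψ v u (z₂ u)))) u) →
      z₁ v = z₂ v → ∀ u ∈ Icc (0 : ℝ) T, z₁ u = z₂ u) :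
    ∀ s u t : ℝ, 0 ≤ s → s ≤ u → u ≤ t → t ≤ T → ∀ ξ,
      ψ u t (χ u t (ψ s u (χ s u ξ))) = ψ s t (χ s t ξ) := by
  intro s u t hs hsu hut htT ξ
  have hsI : s ∈ Icc (0:ℝ) T := ⟨hs, le_trans hsu (le_trans hut htT)⟩
  have huI : u ∈ Icc (0:ℝ) T := ⟨le_trans hs hsu, le_trans hut htT⟩
  have htI : t ∈ Icc (0:ℝ) T := ⟨le_trans (le_trans hs hsu) hut, htT⟩
  -- key: z₂ r := ψ s u (χ s r ξ) satisfies the v = u ODE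
  set z₁ : ℝ → EuclideanSpace ℝ (Fin m) := fun r => χ u r (ψ s u (χ s u ξ)) with hz₁
  set z₂ : ℝ → EuclideanSpace ℝ (Fin m) := fun r => ψ s u (χ s r ξ) with hz₂
  have hψc : ∀ r ∈ Icc (0:ℝ) T, ∀ x, ψ u r (ψ s u x) = ψ s r x := fun r hr x =>
    hψ_flow s hsI u huI r hr x
  have hDchain : ∀ r ∈ Icc (0:ℝ) T, ∀ x,
      (D u r (ψ s u x)).comp (D s u x) = D s r x := by
    intro r hr x
    have h1 : HasFDerivAt (ψ s r) ((D u r (ψ s u x)).comp (D s u x)) x := by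
      have := (hD u huI r hr (ψ s u x)).comp x (hD s hsI u huI x)
      have heq : (ψ u r) ∘ (ψ s u) = ψ s r := funext fun y => hψc r hr y
      rwa [heq] at this
    exact h1.unique (hD s hsI r hr x)
  have hJchain : ∀ r ∈ Icc (0:ℝ) T, ∀ x,
      (D s u x).comp (J s r x) = J u r (ψ s u x) := by
    intro r hr x
    have hA := hJD u huI r hr (ψ s u x)
    have hB := hJD s hsI r hr x
    calc (D s u x).comp (J s r x)
        = ((J u r (ψ s u x)).comp (D u r (ψ s u x))).comp
            ((D s u x).comp (J s r x)) := by rw [hA.1]; simp [ContinuousLinearMap.one_def]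
      _ = (J u r (ψ s u x)).comp
            (((D u r (ψ s u x)).comp (D s u x)).comp (J s r x)) := by
              simp only [ContinuousLinearMap.comp_assoc]
      _ = J u r (ψ s u x) := by
              rw [hDchain r hr x, hB.2]; simp [ContinuousLinearMap.one_def]
  have hode₂ : ∀ r ∈ Icc (0:ℝ) T,
      HasDerivAt z₂ (J u r (z₂ r) (b (ψ u r (z₂ r)))) r := by
    intro r hr
    have h := (hD s hsI u huI (χ s r ξ)).comp_hasDerivAt r (hχ_ode s hsI ξ r hr)
    have hval : D s u (χ s r ξ) (J s r (χ s r ξ) (b (ψ s r (χ s r ξ))))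
        = J u r (z₂ r) (b (ψ u r (z₂ r))) := by
      have h1 : ψ u r (z₂ r) = ψ s r (χ s r ξ) := hψc r hr _
      have h2 := congrArg (fun (L : EuclideanSpace ℝ (Fin m) →L[ℝ] EuclideanSpace ℝ (Fin m))
        => L (b (ψ s r (χ s r ξ)))) (hJchain r hr (χ s r ξ))
      simpa [h1, hz₂, hψc r hr, ContinuousLinearMap.comp_apply] using h2
    rw [← hval]
    exact h
  have hode₁ : ∀ r ∈ Icc (0:ℝ) T,
      HasDerivAt z₁ (J u r (z₁ r) (b (ψ u r (z₁ r)))) r := fun r hr =>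
    hχ_ode u huI (ψ s u (χ s u ξ)) r hr
  have hini : z₁ u = z₂ u := by
    simp only [hz₁, hz₂, hχ_init u huI]
  have hkey := huniq u huI z₁ z₂ hode₁ hode₂ hini t htI
  simp only [hz₁, hz₂] at hkey
  rw [hkey, hψc t htI]
end

section
/- Let ω, ω' be control functions on [0,T] and set ω̃ = ω + ω' (which is again a control function). Then for any δ > 0, N_δ(ω̃) ≤ 2N_δ(ω) + 2N_δ(ω') + 2, where N_δ is defined via the greedy stopping-time sequence τ₀ = 0, τ_{n+1} = inf{u ∈ (τ_n, T] : ω̃(τ_n, u) ≥ δ} ∧ T, N_δ(ω̃) = sup{n : τ_n < T}. -/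
open Set

/-- The greedy stopping-time sequence associated to a control `ω`, threshold `δ`,
on the interval `[0,T]`. -/
noncomputable def tauSeq (T : ℝ) (ω : ℝ → ℝ → ℝ) (δ : ℝ) : ℕ → ℝ
  | 0 => 0
  | n + 1 =>
      sInf ({u : ℝ | tauSeq T ω δ n < u ∧ u ≤ T ∧ δ ≤ ω (tauSeq T ω δ n) u} ∪ {T})

/-- `N_δ(ω) = sup{n : τ_n < T}`. -/
noncomputable def Ncount (T : ℝ) (ω : ℝ → ℝ → ℝ) (δ : ℝ) : ℕ :=
  sSup {n : ℕ | tauSeq T ω δ n < T}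

section Aux

variable {T δ : ℝ} {ω : ℝ → ℝ → ℝ}

lemma tauSeq_succ_def (n : ℕ) : tauSeq T ω δ (n + 1) =
    sInf ({u : ℝ | tauSeq T ω δ n < u ∧ u ≤ T ∧ δ ≤ ω (tauSeq T ω δ n) u} ∪ {T}) := rfl

lemma stepSet_lb (n : ℕ) (hTn : tauSeq T ω δ n ≤ T) :
    ∀ u ∈ ({u : ℝ | tauSeq T ω δ n < u ∧ u ≤ T ∧ δ ≤ ω (tauSeq T ω δ n) u} ∪ {T}),
      tauSeq T ω δ n ≤ u := by
  rintro u (hu | hu)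
  · exact hu.1.le
  · rw [Set.mem_singleton_iff] at hu
    exact hu ▸ hTn

lemma tau_bounds (hT : 0 ≤ T) (n : ℕ) :
    0 ≤ tauSeq T ω δ n ∧ tauSeq T ω δ n ≤ T := by
  induction n with
  | zero => exact ⟨le_refl 0, hT⟩
  | succ n ih =>
    obtain ⟨h0, hTn⟩ := ih
    have hlb := stepSet_lb (ω := ω) (δ := δ) n hTn
    constructor
    · exact h0.trans (le_csInf ⟨T, Or.inr rfl⟩ hlb)
    · rw [tauSeq_succ_def]
      exact csInf_le ⟨_, hlb⟩ (Or.inr rfl)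

lemma tau_le_succ (hT : 0 ≤ T) (n : ℕ) : tauSeq T ω δ n ≤ tauSeq T ω δ (n + 1) := by
  rw [tauSeq_succ_def]
  exact le_csInf ⟨T, Or.inr rfl⟩ (stepSet_lb n (tau_bounds hT n).2)

lemma tau_mono (hT : 0 ≤ T) : Monotone (tauSeq T ω δ) :=
  monotone_nat_of_le_succ (tau_le_succ hT)

lemma tau_step_le (hT : 0 ≤ T) (hδ : 0 < δ)
    (hzero : ∀ t, 0 ≤ t → t ≤ T → ω t t = 0)
    (hnonneg : ∀ s t, 0 ≤ s → s ≤ t → t ≤ T → 0 ≤ ω s t)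
    (hsuper : ∀ s t u, 0 ≤ s → s ≤ t → t ≤ u → u ≤ T → ω s t + ω t u ≤ ω s u)
    (n : ℕ) {s t : ℝ} (hs : tauSeq T ω δ n ≤ s) (hst : s ≤ t) (htT : t ≤ T)
    (hδst : δ ≤ ω s t) : tauSeq T ω δ (n + 1) ≤ t := by
  obtain ⟨h0n, hTn⟩ := tau_bounds (ω := ω) (δ := δ) hT n
  have h0s : 0 ≤ s := h0n.trans hs
  have hlt : tauSeq T ω δ n < t := by
    rcases (hs.trans hst).lt_or_eq with h | h
    · exact h
    · exfalso
      have hst' : s = t := le_antisymm hst (h ▸ hs)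
      have : ω s t = 0 := hst' ▸ hzero t (h0s.trans_eq hst') htT
      linarith
  have hδτ : δ ≤ ω (tauSeq T ω δ n) t := by
    have h1 := hsuper (tauSeq T ω δ n) s t h0n hs hst htT
    have h2 := hnonneg (tauSeq T ω δ n) s h0n hs (hst.trans htT)
    linarith
  rw [tauSeq_succ_def]
  exact csInf_le ⟨_, stepSet_lb n hTn⟩ (Or.inl ⟨hlt, htT, hδτ⟩)

lemma tau_delta (hT : 0 ≤ T) (hδ : 0 < δ)
    (hcont : ContinuousOn (fun p : ℝ × ℝ => ω p.1 p.2)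
      {p : ℝ × ℝ | 0 ≤ p.1 ∧ p.1 ≤ p.2 ∧ p.2 ≤ T})
    (n : ℕ) (h : tauSeq T ω δ (n + 1) < T) :
    δ ≤ ω (tauSeq T ω δ n) (tauSeq T ω δ (n + 1)) := by
  obtain ⟨h0x, hxT⟩ := tau_bounds (ω := ω) (δ := δ) hT n
  set x := tauSeq T ω δ n with hx
  set S := {u : ℝ | x < u ∧ u ≤ T ∧ δ ≤ ω x u} with hSdef
  have hbdd : BddBelow S := ⟨x, fun u hu => hu.1.le⟩
  have hSne : S.Nonempty := by
    by_contra hne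
    rw [not_nonempty_iff_eq_empty] at hne
    have : tauSeq T ω δ (n + 1) = T := by
      rw [tauSeq_succ_def, ← hx, ← hSdef, hne, empty_union, csInf_singleton]
    rw [this] at h
    exact lt_irrefl T h
  have hrw : tauSeq T ω δ (n + 1) = T ⊓ sInf S := by
    rw [tauSeq_succ_def, ← hx, ← hSdef, union_singleton, csInf_insert hbdd hSne]
  have hlt : sInf S < T := by
    have h' := h
    rw [hrw] at h'
    rcases inf_lt_iff.mp h' with h1 | h1
    · exact absurd h1 (lt_irrefl T)
    · exact h1
  have heq : tauSeq T ω δ (n + 1) = sInf S := by rw [hrw, inf_eq_right.mpr hlt.le]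
  have hfc : ContinuousOn (fun u => ω x u) (Icc x T) := by
    have hmap : MapsTo (fun u : ℝ => (x, u)) (Icc x T)
        {p : ℝ × ℝ | 0 ≤ p.1 ∧ p.1 ≤ p.2 ∧ p.2 ≤ T} :=
      fun u hu => ⟨h0x, hu.1, hu.2⟩
    exact hcont.comp ((continuous_const.prodMk continuous_id).continuousOn) hmap
  have hCclosed : IsClosed (Icc x T ∩ (fun u => ω x u) ⁻¹' Ici δ) :=
    hfc.preimage_isClosed_of_isClosed isClosed_Icc isClosed_Ici
  have hsub : S ⊆ Icc x T ∩ (fun u => ω x u) ⁻¹' Ici δ :=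
    fun u hu => ⟨⟨hu.1.le, hu.2.1⟩, hu.2.2⟩
  have hmem := closure_minimal hsub hCclosed (csInf_mem_closure hSne hbdd)
  rw [heq]
  exact hmem.2

lemma ncount_bdd (hT : 0 ≤ T) (hδ : 0 < δ)
    (hzero : ∀ t, 0 ≤ t → t ≤ T → ω t t = 0)
    (hnonneg : ∀ s t, 0 ≤ s → s ≤ t → t ≤ T → 0 ≤ ω s t)
    (hsuper : ∀ s t u, 0 ≤ s → s ≤ t → t ≤ u → u ≤ T → ω s t + ω t u ≤ ω s u)
    (hcont : ContinuousOn (fun p : ℝ × ℝ => ω p.1 p.2)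
      {p : ℝ × ℝ | 0 ≤ p.1 ∧ p.1 ≤ p.2 ∧ p.2 ≤ T}) :
    BddAbove {n : ℕ | tauSeq T ω δ n < T} := by
  have key : ∀ n : ℕ, tauSeq T ω δ n < T → δ * n ≤ ω 0 (tauSeq T ω δ n) := by
    intro n
    induction n with
    | zero =>
      intro _
      have : tauSeq T ω δ 0 = 0 := rfl
      rw [this, hzero 0 le_rfl hT]
      simp
    | succ n ih =>
      intro h
      have hstep := tau_le_succ (ω := ω) (δ := δ) hT n
      have hnlt : tauSeq T ω δ n < T := lt_of_le_of_lt hstep h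
      have h1 := ih hnlt
      have h2 := tau_delta hT hδ hcont n h
      have h3 := hsuper 0 (tauSeq T ω δ n) (tauSeq T ω δ (n + 1)) le_rfl
        (tau_bounds hT n).1 hstep (tau_bounds hT (n + 1)).2
      push_cast
      linarith
  refine ⟨Nat.ceil (ω 0 T / δ), fun n hn => ?_⟩
  have h1 := key n hn
  obtain ⟨h0n, _⟩ := tau_bounds (ω := ω) (δ := δ) hT n
  have h2 := hsuper 0 (tauSeq T ω δ n) T le_rfl h0n hn.le le_rfl
  have h3 := hnonneg (tauSeq T ω δ n) T h0n hn.le le_rfl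
  have h4 : (n : ℝ) ≤ ω 0 T / δ := by
    rw [le_div_iff₀ hδ]
    nlinarith
  have h5 : (n : ℝ) ≤ (Nat.ceil (ω 0 T / δ) : ℝ) := h4.trans (Nat.le_ceil _)
  exact_mod_cast h5

lemma greedy_le (hT : 0 ≤ T) (hδ : 0 < δ)
    (hzero : ∀ t, 0 ≤ t → t ≤ T → ω t t = 0)
    (hnonneg : ∀ s t, 0 ≤ s → s ≤ t → t ≤ T → 0 ≤ ω s t)
    (hsuper : ∀ s t u, 0 ≤ s → s ≤ t → t ≤ u → u ≤ T → ω s t + ω t u ≤ ω s u)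
    (m : ℕ) (a b : ℕ → ℝ)
    (h0a : ∀ i < m, 0 ≤ a i) (hab : ∀ i < m, a i ≤ b i)
    (hbT : ∀ i < m, b i ≤ T) (hδab : ∀ i < m, δ ≤ ω (a i) (b i))
    (hba : ∀ i, i + 1 < m → b i ≤ a (i + 1)) :
    ∀ j < m, tauSeq T ω δ j ≤ a j ∧ tauSeq T ω δ (j + 1) ≤ b j := by
  intro j
  induction j with
  | zero =>
    intro h
    have h1 : tauSeq T ω δ 0 ≤ a 0 := by
      have : tauSeq T ω δ 0 = 0 := rfl
      rw [this]; exact h0a 0 h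
    exact ⟨h1, tau_step_le hT hδ hzero hnonneg hsuper 0 h1 (hab 0 h) (hbT 0 h) (hδab 0 h)⟩
  | succ j ih =>
    intro h
    have hj := ih (Nat.lt_of_succ_lt h)
    have h1 : tauSeq T ω δ (j + 1) ≤ a (j + 1) := hj.2.trans (hba j h)
    exact ⟨h1, tau_step_le hT hδ hzero hnonneg hsuper (j + 1) h1 (hab _ h) (hbT _ h) (hδab _ h)⟩

lemma card_le_key (hT : 0 ≤ T) (hδ : 0 < δ)
    (hzero : ∀ t, 0 ≤ t → t ≤ T → ω t t = 0)
    (hnonneg : ∀ s t, 0 ≤ s → s ≤ t → t ≤ T → 0 ≤ ω s t)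
    (hsuper : ∀ s t u, 0 ≤ s → s ≤ t → t ≤ u → u ≤ T → ω s t + ω t u ≤ ω s u)
    (hcont : ContinuousOn (fun p : ℝ × ℝ => ω p.1 p.2)
      {p : ℝ × ℝ | 0 ≤ p.1 ∧ p.1 ≤ p.2 ∧ p.2 ≤ T})
    (τ : ℕ → ℝ) (hτ0 : ∀ n, 0 ≤ τ n) (hτT : ∀ n, τ n ≤ T) (hτm : Monotone τ)
    (N : ℕ) (hτN : τ N < T)
    (F : Finset ℕ) (hFN : ∀ k ∈ F, k < N)
    (hFδ : ∀ k ∈ F, δ / 2 ≤ ω (τ k) (τ (k + 1))) :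
    F.card ≤ 2 * Ncount T ω δ + 1 := by
  set m := F.card / 2 with hm
  rcases Nat.eq_zero_or_pos m with hm0 | hm0
  · omega
  · set g : ℕ → ℕ := fun j => if h : j < F.card then F.orderEmbOfFin rfl ⟨j, h⟩ else 0 with hg
    have hgmem : ∀ j, j < F.card → g j ∈ F := by
      intro j hj
      simp only [hg, dif_pos hj]
      exact Finset.orderEmbOfFin_mem F rfl _
    have hgmono : ∀ j j', j < j' → j' < F.card → g j < g j' := by
      intro j j' hjj hj'
      have hj : j < F.card := hjj.trans hj'
      simp only [hg, dif_pos hj, dif_pos hj']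
      exact (F.orderEmbOfFin rfl).strictMono (by exact Fin.mk_lt_mk.mpr hjj)
    set a : ℕ → ℝ := fun i => τ (g (2 * i)) with ha
    set b : ℕ → ℝ := fun i => τ (g (2 * i + 1) + 1) with hb
    have hidx : ∀ i < m, 2 * i + 1 < F.card := by intro i hi; omega
    have key := greedy_le hT hδ hzero hnonneg hsuper m a b
      (fun i _ => hτ0 _)
      (fun i hi => by
        have h1 : g (2 * i) < g (2 * i + 1) := hgmono _ _ (by omega) (hidx i hi)
        exact hτm (by omega))
      (fun i _ => hτT _)
      (fun i hi => by
        have hcard := hidx i hi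
        set p := g (2 * i) with hp
        set r := g (2 * i + 1) with hr
        have hpmem : p ∈ F := hgmem _ (by omega)
        have hrmem : r ∈ F := hgmem _ hcard
        have hpr : p < r := hgmono _ _ (by omega) hcard
        have h1 := hFδ _ hpmem
        have h2 := hFδ _ hrmem
        have hc1 : τ p ≤ τ (p + 1) := hτm (by omega)
        have hc2 : τ (p + 1) ≤ τ r := hτm (by omega)
        have hc3 : τ r ≤ τ (r + 1) := hτm (by omega)
        have hs1 := hsuper (τ p) (τ (p + 1)) (τ (r + 1)) (hτ0 p) hc1
          (hc2.trans hc3) (hτT _)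
        have hs2 := hsuper (τ (p + 1)) (τ r) (τ (r + 1)) (hτ0 _) hc2 hc3 (hτT _)
        have hnn := hnonneg (τ (p + 1)) (τ r) (hτ0 _) hc2 (hτT _)
        show δ ≤ ω (τ p) (τ (r + 1))
        linarith)
      (fun i hi => by
        have h1 : g (2 * i + 1) + 1 ≤ g (2 * (i + 1)) := by
          have := hgmono (2 * i + 1) (2 * (i + 1)) (by omega) (by omega)
          omega
        exact hτm h1)
    have hlast := (key (m - 1) (by omega)).2
    have hm1 : m - 1 + 1 = m := by omega
    rw [hm1] at hlast
    have hbm : b (m - 1) < T := by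
      have hcard : 2 * (m - 1) + 1 < F.card := by omega
      have h1 : g (2 * (m - 1) + 1) < N := hFN _ (hgmem _ hcard)
      calc b (m - 1) = τ (g (2 * (m - 1) + 1) + 1) := rfl
        _ ≤ τ N := hτm (by omega)
        _ < T := hτN
    have hmmem : m ∈ {n : ℕ | tauSeq T ω δ n < T} := lt_of_le_of_lt hlast hbm
    have hmle : m ≤ Ncount T ω δ :=
      le_csSup (ncount_bdd hT hδ hzero hnonneg hsuper hcont) hmmem
    omega

end Aux

theorem Ncount_add_le (T δ : ℝ) (hT : 0 ≤ T) (hδ : 0 < δ) (ω ω' : ℝ → ℝ → ℝ)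
    (hzero : ∀ t, 0 ≤ t → t ≤ T → ω t t = 0)
    (hzero' : ∀ t, 0 ≤ t → t ≤ T → ω' t t = 0)
    (hnonneg : ∀ s t, 0 ≤ s → s ≤ t → t ≤ T → 0 ≤ ω s t)
    (hnonneg' : ∀ s t, 0 ≤ s → s ≤ t → t ≤ T → 0 ≤ ω' s t)
    (hsuper : ∀ s t u, 0 ≤ s → s ≤ t → t ≤ u → u ≤ T → ω s t + ω t u ≤ ω s u)
    (hsuper' : ∀ s t u, 0 ≤ s → s ≤ t → t ≤ u → u ≤ T → ω' s t + ω' t u ≤ ω' s u)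
    (hcont : ContinuousOn (fun p : ℝ × ℝ => ω p.1 p.2)
      {p : ℝ × ℝ | 0 ≤ p.1 ∧ p.1 ≤ p.2 ∧ p.2 ≤ T})
    (hcont' : ContinuousOn (fun p : ℝ × ℝ => ω' p.1 p.2)
      {p : ℝ × ℝ | 0 ≤ p.1 ∧ p.1 ≤ p.2 ∧ p.2 ≤ T}) :
    Ncount T (fun s t => ω s t + ω' s t) δ ≤
      2 * Ncount T ω δ + 2 * Ncount T ω' δ + 2 := by
  classical
  set W : ℝ → ℝ → ℝ := fun s t => ω s t + ω' s t with hW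
  have hzW : ∀ t, 0 ≤ t → t ≤ T → W t t = 0 := fun t h1 h2 => by
    simp [hW, hzero t h1 h2, hzero' t h1 h2]
  have hnW : ∀ s t, 0 ≤ s → s ≤ t → t ≤ T → 0 ≤ W s t := fun s t h1 h2 h3 => by
    have := hnonneg s t h1 h2 h3; have := hnonneg' s t h1 h2 h3
    simp only [hW]; linarith
  have hsW : ∀ s t u, 0 ≤ s → s ≤ t → t ≤ u → u ≤ T → W s t + W t u ≤ W s u := by
    intro s t u h1 h2 h3 h4
    have := hsuper s t u h1 h2 h3 h4; have := hsuper' s t u h1 h2 h3 h4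
    simp only [hW]; linarith
  have hcW : ContinuousOn (fun p : ℝ × ℝ => W p.1 p.2)
      {p : ℝ × ℝ | 0 ≤ p.1 ∧ p.1 ≤ p.2 ∧ p.2 ≤ T} := hcont.add hcont'
  set τ : ℕ → ℝ := tauSeq T W δ with hτ
  rcases eq_empty_or_nonempty {n : ℕ | τ n < T} with hS | hS
  · have h0 : Ncount T W δ = 0 := by
      rw [Ncount, ← hτ, hS, csSup_empty]
      rfl
    omega
  · have hbdd : BddAbove {n : ℕ | τ n < T} := ncount_bdd hT hδ hzW hnW hsW hcW
    set N := Ncount T W δ with hN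
    have hNmem : τ N < T := Nat.sSup_mem hS hbdd
    have hτm : Monotone τ := tau_mono hT
    have hτ0 : ∀ n, 0 ≤ τ n := fun n => (tau_bounds hT n).1
    have hτT : ∀ n, τ n ≤ T := fun n => (tau_bounds hT n).2
    have hδk : ∀ k, k < N → δ ≤ W (τ k) (τ (k + 1)) := by
      intro k hk
      exact tau_delta hT hδ hcW k (lt_of_le_of_lt (hτm (by omega : k + 1 ≤ N)) hNmem)
    set A := (Finset.range N).filter (fun k => δ / 2 ≤ ω (τ k) (τ (k + 1))) with hA
    set B := (Finset.range N).filter (fun k => δ / 2 ≤ ω' (τ k) (τ (k + 1))) with hB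
    have hsub : Finset.range N ⊆ A ∪ B := by
      intro k hk
      rw [Finset.mem_union, hA, hB, Finset.mem_filter, Finset.mem_filter]
      have h1 := hδk k (Finset.mem_range.mp hk)
      by_contra hcon
      push_neg at hcon
      obtain ⟨hc1, hc2⟩ := hcon
      have := hc1 hk
      have := hc2 hk
      simp only [hW] at h1
      linarith
    have hcardA : A.card ≤ 2 * Ncount T ω δ + 1 :=
      card_le_key hT hδ hzero hnonneg hsuper hcont τ hτ0 hτT hτm N hNmem A
        (fun k hk => Finset.mem_range.mp (Finset.mem_filter.mp hk).1)
        (fun k hk => (Finset.mem_filter.mp hk).2)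
    have hcardB : B.card ≤ 2 * Ncount T ω' δ + 1 :=
      card_le_key hT hδ hzero' hnonneg' hsuper' hcont' τ hτ0 hτT hτm N hNmem B
        (fun k hk => Finset.mem_range.mp (Finset.mem_filter.mp hk).1)
        (fun k hk => (Finset.mem_filter.mp hk).2)
    have hNcard : N ≤ A.card + B.card := by
      calc N = (Finset.range N).card := (Finset.card_range N).symm
        _ ≤ (A ∪ B).card := Finset.card_le_card hsub
        _ ≤ A.card + B.card := Finset.card_union_le A B
    show Ncount T W δ ≤ 2 * Ncount T ω δ + 2 * Ncount T ω' δ + 2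
    omega
end
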